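/- Let A₁ and A₂ be weighted automata over V and p, q : ℝ≥0∞. Then for every valuation σ : V → ℕ, ⟦A₁ ⊕_{p,q} A₂⟧ σ = p * ⟦A₁⟧ σ + q * ⟦A₂⟧ σ. -/

import Mathlib

open scoped ENNReal
open Classical

/-- Weighted automata over a commutative alphabet `V` with weights in `ℝ≥0∞`. -/
structure WA (V : Type) where
  Q : Type
  [fin : Fintype Q]
  [dec : DecidableEq Q]
  w : Q → Q → ℝ≥0∞
  lab : Q → Q → Option V
  I : Q → ℝ≥0∞
  F : Q → ℝ≥0∞

attribute [instance] WA.fin WA.dec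

variable {V : Type} [Fintype V] [DecidableEq V]

/-- Weight of a path of length `n`. -/
noncomputable def WA.pathWeight (A : WA V) {n : ℕ} (p : Fin (n + 1) → A.Q) : ℝ≥0∞ :=
  A.I (p 0) * (∏ i : Fin n, A.w (p i.castSucc) (p i.succ)) * A.F (p (Fin.last n))

/-- Parikh image of a path: the number of `X`-labeled transitions, for each `X : V`. -/
def WA.parikh (A : WA V) {n : ℕ} (p : Fin (n + 1) → A.Q) : V → ℕ := fun X =>
  (Finset.univ.filter fun i : Fin n => A.lab (p i.castSucc) (p i.succ) = some X).card

/-- Behavior of a weighted automaton, as a map from valuations to `ℝ≥0∞`. -/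
noncomputable def WA.behavior (A : WA V) (σ : V → ℕ) : ℝ≥0∞ :=
  ∑' (n : ℕ) (p : {p : Fin (n + 1) → A.Q // A.parikh p = σ}), A.pathWeight p.1

/-- Total mass of a weighted automaton. -/
noncomputable def WA.mass (A : WA V) : ℝ≥0∞ :=
  ∑' σ : V → ℕ, A.behavior σ

/-- Number of transitions with nonzero weight. -/
noncomputable def WA.size (A : WA V) : ℕ :=
  Nat.card {qr : A.Q × A.Q // A.w qr.1 qr.2 ≠ 0}

/-- Deterministic finite automata over alphabet `V` with a finite state type. -/
structure DFA' (V : Type) where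
  S : Type
  [fin : Fintype S]
  [dec : DecidableEq S]
  step : S → V → S
  start : S
  accept : Finset S

attribute [instance] DFA'.fin DFA'.dec

def DFA'.Accepts (B : DFA' V) (w : List V) : Prop :=
  w.foldl B.step B.start ∈ B.accept

/-- The language of `B` is closed under permutations of letters. -/
def DFA'.PermClosed (B : DFA' V) : Prop :=
  ∀ w₁ w₂ : List V, w₁.Perm w₂ → (B.Accepts w₁ ↔ B.Accepts w₂)

/-- Parikh image of a word. -/
def parikhWord (w : List V) : V → ℕ := fun X => w.count X

/-- Product of a weighted automaton with a DFA. -/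
noncomputable def WA.prodDFA (A : WA V) (B : DFA' V) : WA V where
  Q := A.Q × B.S
  w := fun a b =>
    match A.lab a.1 b.1 with
    | some X => if b.2 = B.step a.2 X then A.w a.1 b.1 else 0
    | none => if b.2 = a.2 then A.w a.1 b.1 else 0
  lab := fun a b => A.lab a.1 b.1
  I := fun a => if a.2 = B.start then A.I a.1 else 0
  F := fun a => if a.2 ∈ B.accept then A.F a.1 else 0

/-- `A[X/1]`: relabel every `X`-transition to an `ε`-transition. -/
def WA.subst1 (A : WA V) (X : V) : WA V :=
  { A with lab := fun q r => if A.lab q r = some X then none else A.lab q r }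

/-- `A[X/0]`: set the weight of every `X`-labeled transition to `0`. -/
def WA.subst0 (A : WA V) (X : V) : WA V :=
  { A with w := fun q r => if A.lab q r = some X then 0 else A.w q r }

/-- Weighted disjoint union `A₁ ⊕_{p,q} A₂`. -/
noncomputable def WA.wsum (p q : ℝ≥0∞) (A₁ A₂ : WA V) : WA V where
  Q := A₁.Q ⊕ A₂.Q
  w := fun a b =>
    match a, b with
    | .inl q, .inl r => A₁.w q r
    | .inr q, .inr r => A₂.w q r
    | _, _ => 0
  lab := fun a b =>
    match a, b with
    | .inl q, .inl r => A₁.lab q r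
    | .inr q, .inr r => A₂.lab q r
    | _, _ => none
  I := Sum.elim (fun s => p * A₁.I s) (fun s => q * A₂.I s)
  F := Sum.elim A₁.F A₂.F

/-- Concatenation `A₁ • A₂`. -/
noncomputable def WA.concat (A₁ A₂ : WA V) : WA V where
  Q := A₁.Q ⊕ A₂.Q
  w := fun a b =>
    match a, b with
    | .inl q, .inl r => A₁.w q r
    | .inr s, .inr t => A₂.w s t
    | .inl q, .inr s => A₁.F q * A₂.I s
    | .inr _, .inl _ => 0
  lab := fun a b =>
    match a, b with
    | .inl q, .inl r => A₁.lab q r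
    | .inr s, .inr t => A₂.lab s t
    | _, _ => none
  I := Sum.elim A₁.I (fun _ => 0)
  F := Sum.elim (fun _ => 0) A₂.F

/-- Transition substitution `A₁[Y/A₂]`. -/
noncomputable def WA.tsubst (A₁ : WA V) (Y : V) (A₂ : WA V) : WA V where
  Q := A₁.Q ⊕ (A₁.Q × A₁.Q × A₂.Q)
  w := fun a b =>
    match a, b with
    | .inl q, .inl r => if A₁.lab q r = some Y then 0 else A₁.w q r
    | .inl q, .inr (q', r, s) =>
        if q' = q ∧ A₁.lab q r = some Y then A₁.w q r * A₂.I s else 0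
    | .inr (q, r, s), .inr (q', r', t) =>
        if q' = q ∧ r' = r then A₂.w s t else 0
    | .inr (q, r, s), .inl r' =>
        if r' = r ∧ A₁.lab q r = some Y then A₂.F s else 0
  lab := fun a b =>
    match a, b with
    | .inl q, .inl r => A₁.lab q r
    | .inr (_, _, s), .inr (_, _, t) => A₂.lab s t
    | _, _ => none
  I := Sum.elim A₁.I (fun _ => 0)
  F := Sum.elim A₁.F (fun _ => 0)

/-- The guard DFA `B_{X>0}`. -/
def BXpos (X : V) : DFA' V where
  S := Bool
  step := fun s a => if a = X then true else s
  start := false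
  accept := {true}

/-- The decrement automaton `A^{X--}`. -/
noncomputable def WA.decrA (A : WA V) (X : V) : WA V :=
  let P := A.prodDFA (BXpos X)
  WA.wsum 1 1
    { P with
      lab := fun a b =>
        if a.2 = false ∧ b.2 = true ∧ P.lab a b = some X then none else P.lab a b }
    (A.subst0 X)

/-- Convolution of two maps `(V → ℕ) → ℝ≥0∞`. -/
noncomputable def conv (f g : (V → ℕ) → ℝ≥0∞) : (V → ℕ) → ℝ≥0∞ := fun σ =>
  ∑' p : {p : (V → ℕ) × (V → ℕ) // p.1 + p.2 = σ}, f p.1.1 * g p.1.2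

/-- Indicator (Dirac) function of a valuation. -/
noncomputable def delta (τ : V → ℕ) : (V → ℕ) → ℝ≥0∞ := fun σ => if σ = τ then 1 else 0

/-- `k`-fold convolution power. -/
noncomputable def convPow (g : (V → ℕ) → ℝ≥0∞) : ℕ → ((V → ℕ) → ℝ≥0∞)
  | 0 => delta 0
  | k + 1 => conv (convPow g k) g

/-- Rectangular guards over `V`. -/
inductive Guard (V : Type) : Type where
  | lt : V → ℕ → Guard V
  | mod : V → (n m : ℕ) → n < m → Guard V
  | and : Guard V → Guard V → Guard V
  | not : Guard V → Guard V

/-- Satisfaction of a guard by a valuation. -/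
def Guard.sat : Guard V → (V → ℕ) → Prop
  | .lt X n, σ => σ X < n
  | .mod X n m _, σ => σ X % m = n
  | .and g₁ g₂, σ => g₁.sat σ ∧ g₂.sat σ
  | .not g, σ => ¬g.sat σ

/-- Number of atomic subformulas. -/
def Guard.atoms : Guard V → ℕ
  | .lt _ _ => 1
  | .mod _ _ _ _ => 1
  | .and g₁ g₂ => g₁.atoms + g₂.atoms
  | .not g => g.atoms

/-- All constants in the guard are at most `N`. -/
def Guard.constLe (N : ℕ) : Guard V → Prop
  | .lt _ n => n ≤ N
  | .mod _ n m _ => n ≤ N ∧ m ≤ N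
  | .and g₁ g₂ => g₁.constLe N ∧ g₂.constLe N
  | .not g => g.constLe N

/-- The counting DFA for `X < n`. -/
def ltDFA (X : V) (n : ℕ) : DFA' V where
  S := Fin (n + 1)
  step := fun s a => if a = X then (if h : s.1 < n then ⟨s.1 + 1, by omega⟩ else s) else s
  start := ⟨0, by omega⟩
  accept := Finset.univ.filter fun s => s.1 < n

/-- The counting DFA for `X ≡ n mod m`. -/
def modDFA (X : V) (n m : ℕ) (h : n < m) : DFA' V where
  S := Fin m
  step := fun s a => if a = X then ⟨(s.1 + 1) % m, Nat.mod_lt _ (by omega)⟩ else s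
  start := ⟨0, by omega⟩
  accept := {⟨n, h⟩}

/-- Product DFA. -/
def DFA'.inter (B C : DFA' V) : DFA' V where
  S := B.S × C.S
  step := fun s a => (B.step s.1 a, C.step s.2 a)
  start := (B.start, C.start)
  accept := B.accept ×ˢ C.accept

/-- Complement DFA. -/
def DFA'.compl (B : DFA' V) : DFA' V :=
  { B with accept := B.acceptᶜ }

/-- The guard DFA `B_φ`. -/
def Guard.dfa : Guard V → DFA' V
  | .lt X n => ltDFA X n
  | .mod X n m h => modDFA X n m h
  | .and g₁ g₂ => g₁.dfa.inter g₂.dfa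
  | .not g => g.dfa.compl

/-- Loop-free ReDiP programs; distributions are given by weighted automata. -/
inductive ReDiP (V : Type) : Type 1 where
  | setzero : V → ReDiP V
  | incrConst : V → ℕ → ReDiP V
  | incrDist : V → WA V → ReDiP V
  | incrVar : V → V → ReDiP V
  | iid : V → WA V → V → ReDiP V
  | decr : V → ReDiP V
  | choice : ℝ≥0∞ → ReDiP V → ReDiP V → ReDiP V
  | ite : Guard V → ReDiP V → ReDiP V → ReDiP V
  | observe : Guard V → ReDiP V
  | seq : ReDiP V → ReDiP V → ReDiP V

/-- A distribution automaton for variable `x`: mass exactly `1` and supported on `x`. -/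
def distWf (x : V) (D : WA V) : Prop :=
  D.mass = 1 ∧ ∀ σ : V → ℕ, D.behavior σ ≠ 0 → ∀ y : V, y ≠ x → σ y = 0

/-- Well-formedness of a ReDiP program. -/
def ReDiP.wf : ReDiP V → Prop
  | .incrDist x D => distWf x D
  | .iid x D _ => distWf x D
  | .choice p P₁ P₂ => p ≤ 1 ∧ P₁.wf ∧ P₂.wf
  | .ite _ P₁ P₂ => P₁.wf ∧ P₂.wf
  | .seq P₁ P₂ => P₁.wf ∧ P₂.wf
  | _ => True

/-- `P` contains no `iid` statements. -/
def ReDiP.noIid : ReDiP V → Prop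
  | .iid _ _ _ => False
  | .choice _ P₁ P₂ => P₁.noIid ∧ P₂.noIid
  | .ite _ P₁ P₂ => P₁.noIid ∧ P₂.noIid
  | .seq P₁ P₂ => P₁.noIid ∧ P₂.noIid
  | _ => True

/-- Program size. -/
def ReDiP.size : ReDiP V → ℕ
  | .choice _ P₁ P₂ => 1 + P₁.size + P₂.size
  | .ite _ P₁ P₂ => 1 + P₁.size + P₂.size
  | .seq P₁ P₂ => P₁.size + P₂.size
  | _ => 1

/-- The `(n+1)`-state chain of `X`-transitions (Dirac distribution `δ_n` on `X`). -/
noncomputable def chainX (X : V) (n : ℕ) : WA V where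
  Q := Fin (n + 1)
  w := fun i j => if j.1 = i.1 + 1 then 1 else 0
  lab := fun i j => if j.1 = i.1 + 1 then some X else none
  I := fun i => if i = ⟨0, by omega⟩ then 1 else 0
  F := fun i => if i = Fin.last n then 1 else 0

/-- The three-state chain with one `Y`-transition followed by one `X`-transition. -/
noncomputable def chainYX (Y X : V) : WA V where
  Q := Fin 3
  w := fun i j => if j.1 = i.1 + 1 then 1 else 0
  lab := fun i j => if j.1 = i.1 + 1 then (if i.1 = 0 then some Y else some X) else none
  I := fun i => if i = 0 then 1 else 0
  F := fun i => if i = Fin.last 2 then 1 else 0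

/-- The two-state automaton with a single `Y`-transition. -/
noncomputable def singleY (Y : V) : WA V := chainX Y 1

/-- The automata translation of a ReDiP program (Table 2). -/
noncomputable def ReDiP.sem : ReDiP V → WA V → WA V
  | .setzero x, A => A.subst1 x
  | .incrConst x n, A => A.concat (chainX x n)
  | .incrDist _ D, A => A.concat D
  | .incrVar x y, A => A.tsubst y (chainYX y x)
  | .iid _ D y, A => A.tsubst y ((singleY y).concat D)
  | .decr x, A => A.decrA x
  | .choice p P₁ P₂, A => WA.wsum p (1 - p) (P₁.sem A) (P₂.sem A)
  | .ite φ P₁ P₂, A =>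
      WA.wsum 1 1 (P₁.sem (A.prodDFA φ.dfa)) (P₂.sem (A.prodDFA (Guard.not φ).dfa))
  | .observe φ, A => A.prodDFA φ.dfa
  | .seq P₁ P₂, A => P₂.sem (P₁.sem A)

/-- The parameters (distribution automata sizes, constants, guard atoms) of `P` are
bounded by `d`, `N` and `η`, respectively. -/
def ReDiP.boundedBy (d N η : ℕ) : ReDiP V → Prop
  | .setzero _ => True
  | .incrConst _ n => n ≤ N
  | .incrDist _ D => D.size ≤ d
  | .incrVar _ _ => True
  | .iid _ D _ => D.size ≤ d
  | .decr _ => True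
  | .choice _ P₁ P₂ => P₁.boundedBy d N η ∧ P₂.boundedBy d N η
  | .ite φ P₁ P₂ =>
      φ.atoms ≤ η ∧ φ.constLe N ∧ P₁.boundedBy d N η ∧ P₂.boundedBy d N η
  | .observe φ => φ.atoms ≤ η ∧ φ.constLe N
  | .seq P₁ P₂ => P₁.boundedBy d N η ∧ P₂.boundedBy d N η

/-- Configurations of the operational Markov chain. -/
inductive Conf (V : Type) : Type 1 where
  | run : ReDiP V → (V → ℕ) → Conf V
  | term : (V → ℕ) → Conf V
  | err : Conf V

/-- One-step transition probabilities of the operational Markov chain from `⟨P, σ⟩`. -/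
noncomputable def pstep : ReDiP V → (V → ℕ) → Conf V → ℝ≥0∞
  | .setzero x, σ, c => if c = Conf.term (Function.update σ x 0) then 1 else 0
  | .incrConst x n, σ, c => if c = Conf.term (Function.update σ x (σ x + n)) then 1 else 0
  | .incrDist x D, σ, c =>
      ∑' n : ℕ,
        if c = Conf.term (Function.update σ x (σ x + n)) then
          D.behavior (fun y => if y = x then n else 0)
        else 0
  | .incrVar x y, σ, c => if c = Conf.term (Function.update σ x (σ x + σ y)) then 1 else 0
  | .iid _ _ _, _, _ => 0
  | .decr x, σ, c => if c = Conf.term (Function.update σ x (σ x - 1)) then 1 else 0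
  | .choice p P₁ P₂, σ, c =>
      (if c = Conf.run P₁ σ then p else 0) + (if c = Conf.run P₂ σ then 1 - p else 0)
  | .ite φ P₁ P₂, σ, c =>
      if φ.sat σ then (if c = Conf.run P₁ σ then 1 else 0)
      else (if c = Conf.run P₂ σ then 1 else 0)
  | .observe φ, σ, c =>
      if φ.sat σ then (if c = Conf.term σ then 1 else 0)
      else (if c = Conf.err then 1 else 0)
  | .seq P₁ P₂, σ, c =>
      match c with
      | .run Q σ' =>
          (if Q = P₂ then pstep P₁ σ (Conf.term σ') else 0) +
          (match Q with
           | .seq P₁' P₂' => if P₂' = P₂ then pstep P₁ σ (Conf.run P₁' σ') else 0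
           | _ => 0)
      | .term _ => 0
      | .err => pstep P₁ σ Conf.err

/-- Transition probabilities between configurations (terminal and error states are absorbing
with no outgoing transitions). -/
noncomputable def cstep : Conf V → Conf V → ℝ≥0∞
  | .run P σ, c => pstep P σ c
  | _, _ => 0

/-- Initial distribution of the operational Markov chain `M(A, P)`. -/
noncomputable def mcInit (A : WA V) (P : ReDiP V) : Conf V → ℝ≥0∞
  | .run P' σ => if P' = P then A.behavior σ else 0
  | _ => 0

/-- Reachability probability `Pr^{M(A,P)}(◇ t)`: the sum over all finite sequences of
configurations ending at `t` and avoiding `t` before, of the initial weight of the first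
configuration times the product of the transition probabilities. -/
noncomputable def reachProb (A : WA V) (P : ReDiP V) (t : Conf V) : ℝ≥0∞ :=
  ∑' (k : ℕ)
      (p : {p : Fin (k + 1) → Conf V //
            p (Fin.last k) = t ∧ ∀ i : Fin k, p i.castSucc ≠ t}),
    mcInit A P (p.1 0) * ∏ i : Fin k, cstep (p.1 i.castSucc) (p.1 i.succ)
section WsumAux

variable {V : Type} [Fintype V] [DecidableEq V]

private lemma tsum_sum_type {α β : Type*} (f : α ⊕ β → ℝ≥0∞) :
    ∑' x : α ⊕ β, f x = (∑' a : α, f (.inl a)) + ∑' b : β, f (.inr b) := by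
  have hfl : ∀ x : α ⊕ β, f x = Sum.elim (fun a => f (.inl a)) (fun _ => 0) x
      + Sum.elim (fun _ => 0) (fun b => f (.inr b)) x := by rintro (a | b) <;> simp
  have e1 : (∑' x : α ⊕ β, Sum.elim (fun a => f (.inl a)) (fun _ => (0 : ℝ≥0∞)) x)
      = ∑' a : α, f (.inl a) := by
    rw [← Function.Injective.tsum_eq Sum.inl_injective
      (f := Sum.elim (fun a => f (.inl a)) fun _ => (0 : ℝ≥0∞))
      (by rintro (a | b) hx
          · exact ⟨a, rfl⟩
          · simp [Function.mem_support] at hx)]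
    simp
  have e2 : (∑' x : α ⊕ β, Sum.elim (fun _ => (0 : ℝ≥0∞)) (fun b => f (.inr b)) x)
      = ∑' b : β, f (.inr b) := by
    rw [← Function.Injective.tsum_eq Sum.inr_injective
      (f := Sum.elim (fun _ => (0 : ℝ≥0∞)) fun b => f (.inr b))
      (by rintro (a | b) hx
          · simp [Function.mem_support] at hx
          · exact ⟨b, rfl⟩)]
    simp
  rw [tsum_congr hfl, ENNReal.tsum_add, e1, e2]

private lemma wsum_pathWeight_inl (A₁ A₂ : WA V) (p q : ℝ≥0∞) {n : ℕ}
    (r : Fin (n + 1) → A₁.Q) :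
    (WA.wsum p q A₁ A₂).pathWeight (Sum.inl ∘ r) = p * A₁.pathWeight r := by
  show p * A₁.I (r 0) * (∏ i : Fin n, A₁.w (r i.castSucc) (r i.succ)) * A₁.F (r (Fin.last n))
      = p * A₁.pathWeight r
  unfold WA.pathWeight
  ring

private lemma wsum_pathWeight_inr (A₁ A₂ : WA V) (p q : ℝ≥0∞) {n : ℕ}
    (r : Fin (n + 1) → A₂.Q) :
    (WA.wsum p q A₁ A₂).pathWeight (Sum.inr ∘ r) = q * A₂.pathWeight r := by
  show q * A₂.I (r 0) * (∏ i : Fin n, A₂.w (r i.castSucc) (r i.succ)) * A₂.F (r (Fin.last n))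
      = q * A₂.pathWeight r
  unfold WA.pathWeight
  ring

private lemma wsum_parikh_inl (A₁ A₂ : WA V) (p q : ℝ≥0∞) {n : ℕ}
    (r : Fin (n + 1) → A₁.Q) :
    (WA.wsum p q A₁ A₂).parikh (Sum.inl ∘ r) = A₁.parikh r := rfl

private lemma wsum_parikh_inr (A₁ A₂ : WA V) (p q : ℝ≥0∞) {n : ℕ}
    (r : Fin (n + 1) → A₂.Q) :
    (WA.wsum p q A₁ A₂).parikh (Sum.inr ∘ r) = A₂.parikh r := rfl

/-- A path in the disjoint union with nonzero weight stays within one summand. -/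
private lemma wsum_path_mem_range (A₁ A₂ : WA V) (p q : ℝ≥0∞) {n : ℕ}
    (r : Fin (n + 1) → A₁.Q ⊕ A₂.Q)
    (h : (WA.wsum p q A₁ A₂).pathWeight r ≠ 0) :
    r ∈ Set.range (Sum.elim (fun s : Fin (n + 1) → A₁.Q => Sum.inl ∘ s)
      (fun s : Fin (n + 1) → A₂.Q => Sum.inr ∘ s)) := by
  have hconst : ∀ i : Fin (n + 1), (r i).isLeft = (r 0).isLeft := by
    intro i
    induction i using Fin.induction with
    | zero => rfl
    | succ j ih =>
      have hw : (WA.wsum p q A₁ A₂).w (r j.castSucc) (r j.succ) ≠ 0 := by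
        intro h0
        apply h
        unfold WA.pathWeight
        rw [Finset.prod_eq_zero (Finset.mem_univ j) h0]
        simp
      rw [← ih]
      rcases hj : r j.castSucc with a | a <;> rcases hjs : r j.succ with b | b <;>
        simp_all [WA.wsum]
  rcases h0 : r 0 with a | a
  · have : ∀ i, ∃ s, r i = Sum.inl s := by
      intro i
      have := hconst i
      rw [h0] at this
      rcases hi : r i with s | s
      · exact ⟨s, rfl⟩
      · rw [hi] at this; simp at this
    choose s hs using this
    exact ⟨Sum.inl s, by funext i; exact (hs i).symm⟩
  · have : ∀ i, ∃ s, r i = Sum.inr s := by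
      intro i
      have := hconst i
      rw [h0] at this
      rcases hi : r i with s | s
      · rw [hi] at this; simp at this
      · exact ⟨s, rfl⟩
    choose s hs using this
    exact ⟨Sum.inr s, by funext i; exact (hs i).symm⟩

end WsumAux
/-- behavior of the weighted disjoint union. -/
theorem stmt_4 (V : Type) [Fintype V] [DecidableEq V] (A₁ A₂ : WA V) (p q : ℝ≥0∞)
    (σ : V → ℕ) :
    (WA.wsum p q A₁ A₂).behavior σ = p * A₁.behavior σ + q * A₂.behavior σ := by
  set W := WA.wsum p q A₁ A₂ with hW
  have key : ∀ n : ℕ,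
      (∑' pp : {r : Fin (n + 1) → W.Q // W.parikh r = σ}, W.pathWeight pp.1)
      = p * (∑' pp : {r : Fin (n + 1) → A₁.Q // A₁.parikh r = σ}, A₁.pathWeight pp.1)
        + q * (∑' pp : {r : Fin (n + 1) → A₂.Q // A₂.parikh r = σ}, A₂.pathWeight pp.1) := by
    intro n
    set g : ((Fin (n + 1) → A₁.Q) ⊕ (Fin (n + 1) → A₂.Q)) → (Fin (n + 1) → W.Q) :=
      Sum.elim (fun s => Sum.inl ∘ s) (fun s => Sum.inr ∘ s) with hg
    set F : (Fin (n + 1) → W.Q) → ℝ≥0∞ :=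
      fun r => if W.parikh r = σ then W.pathWeight r else 0 with hF
    have hginj : Function.Injective g := by
      rintro (s | s) (t | t) h <;> simp only [hg, Sum.elim_inl, Sum.elim_inr] at h
      · exact congrArg _ (funext fun i => Sum.inl_injective (congrFun h i))
      · exact absurd (congrFun h 0) (fun h' => Sum.inl_ne_inr h')
      · exact absurd (congrFun h 0) (fun h' => Sum.inr_ne_inl h')
      · exact congrArg _ (funext fun i => Sum.inr_injective (congrFun h i))
    have step1 : (∑' pp : {r : Fin (n + 1) → W.Q // W.parikh r = σ}, W.pathWeight pp.1)
        = ∑' r : Fin (n + 1) → W.Q, F r := by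
      rw [show (∑' pp : {r : Fin (n + 1) → W.Q // W.parikh r = σ}, W.pathWeight pp.1)
          = ∑' pp : {r | W.parikh r = σ}, W.pathWeight pp.1 from rfl,
        tsum_subtype]
      exact tsum_congr fun r => by by_cases h : W.parikh r = σ <;>
        simp [hF, Set.indicator_apply, h]
    have step2 : (∑' r : Fin (n + 1) → W.Q, F r) = ∑' x, F (g x) := by
      refine (Function.Injective.tsum_eq hginj ?_).symm
      intro r hr
      have hne : W.pathWeight r ≠ 0 := by
        intro h0
        apply hr
        simp [hF, h0]
      exact wsum_path_mem_range A₁ A₂ p q r hne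
    rw [step1, step2, tsum_sum_type]
    congr 1
    · have : ∀ s : Fin (n + 1) → A₁.Q,
          F (g (.inl s)) = p * (if A₁.parikh s = σ then A₁.pathWeight s else 0) := by
        intro s
        show (if (WA.wsum p q A₁ A₂).parikh (Sum.inl ∘ s) = σ
            then (WA.wsum p q A₁ A₂).pathWeight (Sum.inl ∘ s) else 0) = _
        rw [wsum_parikh_inl, wsum_pathWeight_inl]
        by_cases h : A₁.parikh s = σ <;> simp [h]
      rw [tsum_congr this, ENNReal.tsum_mul_left]
      congr 1
      rw [show (∑' pp : {r : Fin (n + 1) → A₁.Q // A₁.parikh r = σ}, A₁.pathWeight pp.1)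
          = ∑' pp : {r | A₁.parikh r = σ}, A₁.pathWeight pp.1 from rfl, tsum_subtype]
      exact tsum_congr fun r => by by_cases h : A₁.parikh r = σ <;>
        simp [Set.indicator_apply, h]
    · have : ∀ s : Fin (n + 1) → A₂.Q,
          F (g (.inr s)) = q * (if A₂.parikh s = σ then A₂.pathWeight s else 0) := by
        intro s
        show (if (WA.wsum p q A₁ A₂).parikh (Sum.inr ∘ s) = σ
            then (WA.wsum p q A₁ A₂).pathWeight (Sum.inr ∘ s) else 0) = _
        rw [wsum_parikh_inr, wsum_pathWeight_inr]
        by_cases h : A₂.parikh s = σ <;> simp [h]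
      rw [tsum_congr this, ENNReal.tsum_mul_left]
      congr 1
      rw [show (∑' pp : {r : Fin (n + 1) → A₂.Q // A₂.parikh r = σ}, A₂.pathWeight pp.1)
          = ∑' pp : {r | A₂.parikh r = σ}, A₂.pathWeight pp.1 from rfl, tsum_subtype]
      exact tsum_congr fun r => by by_cases h : A₂.parikh r = σ <;>
        simp [Set.indicator_apply, h]
  unfold WA.behavior
  rw [tsum_congr key, ENNReal.tsum_add, ENNReal.tsum_mul_left, ENNReal.tsum_mul_left]
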